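/- Let G be a finite simple graph and a, b two nonadjacent vertices of G. If a and b have no common neighbor in G (S_{a,b} = ∅), or if S_{a,b} ≠ ∅ and k_min((a,b)) > |S_{a,b}| + 1, then inserting the edge (a,b) affects no existing edge: for every edge e' of G, φ_{G+(a,b)}(e') = φ_G(e'). -/

import Mathlib

open SimpleGraph

variable {V : Type*}

/-- `H` is a `k`-truss of `G`: a connected subgraph with at least one edge in which
every edge lies in at least `k - 2` triangles of `H` (i.e. the endpoints of every edge
have at least `k - 2` common neighbors in `H`). -/
def IsTruss (G : SimpleGraph V) (k : ℕ) (H : G.Subgraph) : Prop :=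
  H.Connected ∧ H.edgeSet.Nonempty ∧
    ∀ a b : V, H.Adj a b → k - 2 ≤ {c : V | H.Adj a c ∧ H.Adj b c}.ncard

/-- The truss number `φ_G(e)` of an edge `e`: the largest `k` such that `e` lies in some
`k`-truss of `G`. -/
noncomputable def trussNumber (G : SimpleGraph V) (e : Sym2 V) : ℕ :=
  sSup {k : ℕ | ∃ H : G.Subgraph, IsTruss G k H ∧ e ∈ H.edgeSet}

/-- The support of the edge `(a, b)` in a subgraph `H`: the number of triangles of `H`
containing it, i.e. the number of common neighbors of `a` and `b` in `H`. -/
noncomputable def suppIn {G : SimpleGraph V} (H : G.Subgraph) (a b : V) : ℕ :=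
  {c : V | H.Adj a c ∧ H.Adj b c}.ncard

/-- The support of the edge `(a, b)` in `G`. -/
noncomputable def suppG (G : SimpleGraph V) (a b : V) : ℕ :=
  {c : V | G.Adj a c ∧ G.Adj b c}.ncard

/-- `S_{a,b}`: the common neighbors of `a` and `b` in `G`. -/
def commonNbrs (G : SimpleGraph V) (a b : V) : Set V :=
  {c : V | G.Adj a c ∧ G.Adj b c}

/-- `E_{S_{a,b} ↔ {a,b}}`: the edges of `G` joining a common neighbor of `a` and `b`
to `a` or to `b`. -/
def sideEdges (G : SimpleGraph V) (a b : V) : Set (Sym2 V) :=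
  {e | ∃ c, G.Adj a c ∧ G.Adj b c ∧ (e = s(a, c) ∨ e = s(b, c))}

/-- `k_min((a,b))`: minimum truss number among the edges of `E_{S_{a,b} ↔ {a,b}}`. -/
noncomputable def kmin (G : SimpleGraph V) (a b : V) : ℕ :=
  sInf (trussNumber G '' sideEdges G a b)

/-- `k_max((a,b))`: maximum truss number among the edges of `E_{S_{a,b} ↔ {a,b}}`. -/
noncomputable def kmax (G : SimpleGraph V) (a b : V) : ℕ :=
  sSup (trussNumber G '' sideEdges G a b)

/-- `G + (a,b)`: the graph obtained from `G` by inserting the edge `(a, b)`. -/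
def insertEdge (G : SimpleGraph V) (a b : V) : SimpleGraph V :=
  G ⊔ fromEdgeSet {s(a, b)}

/- ### Auxiliary material -/

lemma insertEdge_adj {G : SimpleGraph V} {a b x y : V} :
    (insertEdge G a b).Adj x y ↔ G.Adj x y ∨ (s(x, y) = s(a, b) ∧ x ≠ y) := by
  simp [insertEdge]

/-- The set of trussnesses of an edge. -/
def trussSet (G : SimpleGraph V) (e : Sym2 V) : Set ℕ :=
  {k : ℕ | ∃ H : G.Subgraph, IsTruss G k H ∧ e ∈ H.edgeSet}

lemma trussNumber_eq (G : SimpleGraph V) (e : Sym2 V) :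
    trussNumber G e = sSup (trussSet G e) := rfl

lemma trussSet_bddAbove [Fintype V] (G : SimpleGraph V) (e : Sym2 V) :
    BddAbove (trussSet G e) := by
  refine ⟨Fintype.card V + 2, ?_⟩
  rintro k ⟨H, ⟨_, _, hsupp⟩, he⟩
  induction e using Sym2.ind with
  | _ x y =>
    have hadj : H.Adj x y := he
    have h1 : k - 2 ≤ {c : V | H.Adj x c ∧ H.Adj y c}.ncard := hsupp x y hadj
    have h2 : {c : V | H.Adj x c ∧ H.Adj y c}.ncard ≤ Fintype.card V := by
      have := Set.ncard_le_ncard (Set.subset_univ {c : V | H.Adj x c ∧ H.Adj y c})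
        (Set.finite_univ (α := V))
      rwa [Set.ncard_univ, Nat.card_eq_fintype_card] at this
    omega

lemma isTruss_anti {G : SimpleGraph V} {H : G.Subgraph} {j k : ℕ} (hjk : j ≤ k)
    (h : IsTruss G k H) : IsTruss G j H :=
  ⟨h.1, h.2.1, fun a b hab => le_trans (Nat.sub_le_sub_right hjk 2) (h.2.2 a b hab)⟩

lemma two_mem_trussSet {G : SimpleGraph V} {e : Sym2 V} (he : e ∈ G.edgeSet) :
    2 ∈ trussSet G e := by
  induction e using Sym2.ind with
  | _ x y =>
    have hadj : G.Adj x y := he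
    exact ⟨G.subgraphOfAdj hadj, ⟨Subgraph.subgraphOfAdj_connected hadj, ⟨s(x, y), by simp⟩,
      fun a b _ => by simp⟩, by simp⟩

lemma le_trussNumber [Fintype V] {G : SimpleGraph V} {e : Sym2 V} {k : ℕ}
    (hk : k ∈ trussSet G e) : k ≤ trussNumber G e :=
  le_csSup (trussSet_bddAbove G e) hk

lemma two_le_trussNumber [Fintype V] {G : SimpleGraph V} {e : Sym2 V} (he : e ∈ G.edgeSet) :
    2 ≤ trussNumber G e := le_trussNumber (two_mem_trussSet he)

lemma exists_truss [Fintype V] {G : SimpleGraph V} {e : Sym2 V} {k : ℕ}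
    (he : e ∈ G.edgeSet) (hk : k ≤ trussNumber G e) :
    ∃ H : G.Subgraph, IsTruss G k H ∧ e ∈ H.edgeSet := by
  have hmem : trussNumber G e ∈ trussSet G e :=
    Nat.sSup_mem ⟨2, two_mem_trussSet he⟩ (trussSet_bddAbove G e)
  obtain ⟨H, hH, heH⟩ := hmem
  exact ⟨H, isTruss_anti hk hH, heH⟩

lemma reach_transfer {W : Type*} {A B : SimpleGraph W}
    (h : ∀ x y, A.Adj x y → B.Reachable x y) {u v : W} (r : A.Reachable u v) :
    B.Reachable u v := by
  obtain ⟨p⟩ := r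
  induction p with
  | nil => exact Reachable.refl _
  | cons ha _ ih => exact (h _ _ ha).trans ih

/-- lift a subgraph along `G ≤ G'`. -/
def liftSub {G G' : SimpleGraph V} (hle : G ≤ G') (H : G.Subgraph) : G'.Subgraph where
  verts := H.verts
  Adj := H.Adj
  adj_sub h := hle (H.adj_sub h)
  edge_vert h := H.edge_vert h
  symm := H.symm

lemma trussNumber_mono [Fintype V] {G G' : SimpleGraph V} (hle : G ≤ G') (e : Sym2 V) :
    trussNumber G e ≤ trussNumber G' e := by
  refine csSup_le' ?_
  rintro k ⟨H, ⟨hc, hne, hsupp⟩, he⟩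
  exact le_trussNumber ⟨liftSub hle H, ⟨⟨hc.coe⟩, hne, hsupp⟩, he⟩

section Del

variable {G : SimpleGraph V} {a b : V}

/-- Delete the edge `(a,b)` from a subgraph of `insertEdge G a b`, landing in `G`. -/
def delE (hab : a ≠ b) (H : (insertEdge G a b).Subgraph) : G.Subgraph where
  verts := H.verts
  Adj x y := H.Adj x y ∧ s(x, y) ≠ s(a, b)
  adj_sub := by
    rintro x y ⟨hxy, hne⟩
    rcases insertEdge_adj.mp (H.adj_sub hxy) with h | ⟨h, _⟩
    · exact h
    · exact absurd h hne
  edge_vert h := H.edge_vert h.1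
  symm := by
    constructor
    rintro x y ⟨hxy, hne⟩
    exact ⟨H.adj_symm hxy, by rwa [Sym2.eq_swap]⟩

lemma delE_connected (hab : a ≠ b) {H : (insertEdge G a b).Subgraph} (hc : H.Connected)
    (hside : H.Adj a b → ∃ c, H.Adj a c ∧ H.Adj b c) : (delE hab H).Connected := by
  refine ⟨?_⟩
  rw [connected_iff]
  constructor
  · intro u v
    refine reach_transfer ?_ (hc.coe u v)
    rintro ⟨x, hx⟩ ⟨y, hy⟩ hxy
    have hxy' : H.Adj x y := hxy
    by_cases hne : s(x, y) = s(a, b)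
    · -- reroute via a common neighbor
      have habH : H.Adj a b := by
        rcases Sym2.eq_iff.mp hne with ⟨h1, h2⟩ | ⟨h1, h2⟩
        · rw [h1, h2] at hxy'; exact hxy'
        · rw [h1, h2] at hxy'; exact hxy'.symm
      obtain ⟨c, hc1, hc2⟩ := hside habH
      have hcv : c ∈ (delE hab H).verts := H.edge_vert hc1.symm
      have hne1 : s(a, c) ≠ s(a, b) := by
        intro hh
        rcases Sym2.eq_iff.mp hh with ⟨-, rfl⟩ | ⟨h1, -⟩
        · exact hc2.ne rfl
        · exact hab h1
      have hne2 : s(c, b) ≠ s(a, b) := by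
        intro hh
        rcases Sym2.eq_iff.mp hh with ⟨rfl, -⟩ | ⟨-, h2⟩
        · exact hc1.ne rfl
        · exact hab h2.symm
      have key : ∀ (hp : a ∈ (delE hab H).verts) (hq : b ∈ (delE hab H).verts),
          (delE hab H).coe.Reachable ⟨a, hp⟩ ⟨b, hq⟩ := by
        intro hp hq
        have r1 : (delE hab H).coe.Adj ⟨a, hp⟩ ⟨c, hcv⟩ := ⟨hc1, hne1⟩
        have r2 : (delE hab H).coe.Adj ⟨c, hcv⟩ ⟨b, hq⟩ := ⟨hc2.symm, hne2⟩
        exact r1.reachable.trans r2.reachable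
      rcases Sym2.eq_iff.mp hne with ⟨h1, h2⟩ | ⟨h1, h2⟩
      · subst h1; subst h2; exact key hx hy
      · subst h1; subst h2; exact (key hy hx).symm
    · exact Adj.reachable (⟨hxy', hne⟩ : (delE hab H).Adj x y)
  · exact Set.nonempty_coe_sort.mpr hc.nonempty

end Del

lemma finsetSup_adj {ι : Type*} {G : SimpleGraph V} (s : Finset ι) (f : ι → G.Subgraph)
    {x y : V} : (s.sup f).Adj x y ↔ ∃ c ∈ s, (f c).Adj x y := by
  classical
  induction s using Finset.induction_on with
  | empty => simp
  | insert _ _ hc ih => rw [Finset.sup_insert, Subgraph.sup_adj, ih]; simp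

lemma sup_finsetSup_connected {ι : Type*} {G : SimpleGraph V} {H₀ : G.Subgraph} {a : V}
    (hH : H₀.Connected) (ha : a ∈ H₀.verts) (s : Finset ι) (f : ι → G.Subgraph)
    (hf : ∀ c ∈ s, (f c).Connected ∧ a ∈ (f c).verts) : (H₀ ⊔ s.sup f).Connected := by
  classical
  induction s using Finset.induction_on with
  | empty => simpa using hH
  | @insert c s hc ih =>
    rw [Finset.sup_insert, sup_comm (f c) (s.sup f), ← sup_assoc]
    refine Subgraph.connected_sup
      (ih fun d hd => hf d (Finset.mem_insert_of_mem hd)).preconnected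
      (hf c (Finset.mem_insert_self c s)).1.preconnected ⟨a, ?_⟩
    rw [Subgraph.verts_inf, Subgraph.verts_sup]
    exact ⟨Or.inl ha, (hf c (Finset.mem_insert_self c s)).2⟩

theorem stmt12 [Fintype V] (G : SimpleGraph V) (a b : V) (hab : a ≠ b)
    (hnadj : ¬ G.Adj a b)
    (h : commonNbrs G a b = ∅ ∨
      (commonNbrs G a b ≠ ∅ ∧ (commonNbrs G a b).ncard + 1 < kmin G a b)) :
    ∀ e' ∈ G.edgeSet, trussNumber (insertEdge G a b) e' = trussNumber G e' := by
  intro e'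
  induction e' using Sym2.ind with
  | _ x y =>
  intro he'
  have hxyG : G.Adj x y := he'
  have hexy : s(x, y) ≠ s(a, b) := by
    intro hh
    rcases Sym2.eq_iff.mp hh with ⟨rfl, rfl⟩ | ⟨rfl, rfl⟩
    · exact hnadj hxyG
    · exact hnadj hxyG.symm
  have hle : G ≤ insertEdge G a b := le_sup_left
  refine le_antisymm ?_ (trussNumber_mono hle _)
  rw [trussNumber_eq]
  refine csSup_le' ?_
  rintro k ⟨H, ⟨hconn, hne2, hsupp⟩, heH⟩
  have hxyH : H.Adj x y := heH
  by_cases habH : H.Adj a b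
  case neg =>
    have hnoab : ∀ p q : V, H.Adj p q → s(p, q) ≠ s(a, b) := by
      intro p q hpq hh
      rcases Sym2.eq_iff.mp hh with ⟨rfl, rfl⟩ | ⟨rfl, rfl⟩
      · exact habH hpq
      · exact habH hpq.symm
    refine le_trussNumber ⟨delE hab H,
      ⟨delE_connected hab hconn (fun hh => absurd hh habH),
        ⟨s(x, y), ⟨hxyH, hexy⟩⟩, ?_⟩, ⟨hxyH, hexy⟩⟩
    rintro p q ⟨hpq, -⟩
    refine le_trans (hsupp p q hpq) (Set.ncard_le_ncard ?_ (Set.toFinite _))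
    rintro z ⟨h1, h2⟩
    exact ⟨⟨h1, hnoab p z h1⟩, ⟨h2, hnoab q z h2⟩⟩
  case pos =>
    rcases le_or_gt k 2 with hk2 | hk3
    · exact hk2.trans (two_le_trussNumber he')
    · set CH : Set V := {c | H.Adj a c ∧ H.Adj b c} with hCHdef
      have hCHcard : k - 2 ≤ CH.ncard := hsupp a b habH
      have hCHne : CH.Nonempty := Set.nonempty_of_ncard_ne_zero (by omega)
      have hCHsub : CH ⊆ commonNbrs G a b := by
        rintro c ⟨h1, h2⟩
        have g1 : G.Adj a c := by
          rcases insertEdge_adj.mp (H.adj_sub h1) with hh | ⟨hh, -⟩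
          · exact hh
          · exfalso
            rcases Sym2.eq_iff.mp hh with ⟨-, rfl⟩ | ⟨h3, -⟩
            · exact h2.ne rfl
            · exact hab h3
        have g2 : G.Adj b c := by
          rcases insertEdge_adj.mp (H.adj_sub h2) with hh | ⟨hh, -⟩
          · exact hh
          · exfalso
            rcases Sym2.eq_iff.mp hh with ⟨h3, -⟩ | ⟨-, rfl⟩
            · exact hab h3.symm
            · exact h1.ne rfl
        exact ⟨g1, g2⟩
      rcases h with hS | ⟨-, hkmin⟩
      · obtain ⟨c, hc⟩ := hCHne
        exact absurd (hCHsub hc) (by rw [hS]; exact Set.notMem_empty c)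
      have hkS : k ≤ (commonNbrs G a b).ncard + 2 := by
        have := Set.ncard_le_ncard hCHsub (Set.toFinite _)
        omega
      have hkmin' : k ≤ kmin G a b := by omega
      have hside : ∀ c : V, ∃ K : G.Subgraph,
          c ∈ CH → IsTruss G k K ∧ K.Adj a c ∧ K.Adj b c := by
        intro c
        by_cases hc : c ∈ CH
        · obtain ⟨g1, g2⟩ := hCHsub hc
          have e1 : k ≤ trussNumber G s(a, c) :=
            hkmin'.trans (Nat.sInf_le ⟨s(a, c), ⟨c, g1, g2, Or.inl rfl⟩, rfl⟩)
          have e2 : k ≤ trussNumber G s(b, c) :=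
            hkmin'.trans (Nat.sInf_le ⟨s(b, c), ⟨c, g1, g2, Or.inr rfl⟩, rfl⟩)
          obtain ⟨K₁, hK₁, hm₁⟩ := exists_truss g1 e1
          obtain ⟨K₂, hK₂, hm₂⟩ := exists_truss g2 e2
          have hK₁ac : K₁.Adj a c := hm₁
          have hK₂bc : K₂.Adj b c := hm₂
          refine ⟨K₁ ⊔ K₂, fun _ => ⟨⟨?_, ⟨s(a, c), Subgraph.edgeSet_mono le_sup_left hm₁⟩, ?_⟩,
            Subgraph.sup_adj.mpr (Or.inl hK₁ac), Subgraph.sup_adj.mpr (Or.inr hK₂bc)⟩⟩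
          · refine Subgraph.connected_sup hK₁.1.preconnected hK₂.1.preconnected ⟨c, ?_⟩
            rw [Subgraph.verts_inf]
            exact ⟨K₁.edge_vert hK₁ac.symm, K₂.edge_vert hK₂bc.symm⟩
          · intro p q hpq
            have hmono : ∀ K : G.Subgraph, K ≤ K₁ ⊔ K₂ →
                {z | K.Adj p z ∧ K.Adj q z}.ncard ≤
                  {z | (K₁ ⊔ K₂).Adj p z ∧ (K₁ ⊔ K₂).Adj q z}.ncard := fun K hK =>
              Set.ncard_le_ncard (fun z hz => ⟨hK.2 hz.1, hK.2 hz.2⟩) (Set.toFinite _)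
            rcases Subgraph.sup_adj.mp hpq with hh | hh
            · exact le_trans (hK₁.2.2 p q hh) (hmono K₁ le_sup_left)
            · exact le_trans (hK₂.2.2 p q hh) (hmono K₂ le_sup_right)
        · exact ⟨⊥, fun hcc => absurd hcc hc⟩
      choose F hF using hside
      have hCHfin : CH.Finite := Set.toFinite CH
      set CHf : Finset V := hCHfin.toFinset with hCHf
      have hmemf : ∀ c : V, c ∈ CHf ↔ c ∈ CH := fun c => hCHfin.mem_toFinset
      set T : G.Subgraph := delE hab H ⊔ CHf.sup F with hTdef
      have hFleT : ∀ c ∈ CHf, F c ≤ T := fun c hc =>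
        le_trans (Finset.le_sup hc) le_sup_right
      have hTconn : T.Connected := by
        refine sup_finsetSup_connected (a := a)
          (delE_connected hab hconn (fun _ => ?_)) (H.edge_vert habH) CHf F ?_
        · obtain ⟨c0, hc01, hc02⟩ := hCHne
          exact ⟨c0, hc01, hc02⟩
        · intro c hc
          obtain ⟨hK, hKa, hKb⟩ := hF c ((hmemf c).mp hc)
          exact ⟨hK.1, (F c).edge_vert hKa⟩
      have hmonoT : ∀ K : G.Subgraph, K ≤ T → ∀ p q : V,
          {z | K.Adj p z ∧ K.Adj q z}.ncard ≤ {z | T.Adj p z ∧ T.Adj q z}.ncard :=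
        fun K hK p q =>
          Set.ncard_le_ncard (fun z hz => ⟨hK.2 hz.1, hK.2 hz.2⟩) (Set.toFinite _)
      have hsuppT : ∀ p q : V, T.Adj p q → k - 2 ≤ {z | T.Adj p z ∧ T.Adj q z}.ncard := by
        intro p q hpq
        by_cases hcase : ∃ c ∈ CH, s(p, q) = s(a, c) ∨ s(p, q) = s(b, c)
        · obtain ⟨c, hc, hpq'⟩ := hcase
          have hFle : F c ≤ T := hFleT c ((hmemf c).mpr hc)
          obtain ⟨hKtruss, hKa, hKb⟩ := hF c hc
          rcases hpq' with hh | hh <;> rcases Sym2.eq_iff.mp hh with ⟨rfl, rfl⟩ | ⟨rfl, rfl⟩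
          · exact le_trans (hKtruss.2.2 _ _ hKa) (hmonoT _ hFle _ _)
          · exact le_trans (hKtruss.2.2 _ _ hKa.symm) (hmonoT _ hFle _ _)
          · exact le_trans (hKtruss.2.2 _ _ hKb) (hmonoT _ hFle _ _)
          · exact le_trans (hKtruss.2.2 _ _ hKb.symm) (hmonoT _ hFle _ _)
        · push_neg at hcase
          rcases Subgraph.sup_adj.mp hpq with ⟨hpqH, hpqne⟩ | hsupF
          · have hsubset : {z | H.Adj p z ∧ H.Adj q z} ⊆ {z | T.Adj p z ∧ T.Adj q z} := by
              rintro z ⟨h1, h2⟩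
              have n1 : s(p, z) ≠ s(a, b) := by
                intro hh
                rcases Sym2.eq_iff.mp hh with ⟨rfl, rfl⟩ | ⟨rfl, rfl⟩
                · exact (hcase q ⟨hpqH, h2.symm⟩).1 rfl
                · exact (hcase q ⟨h2.symm, hpqH⟩).2 rfl
              have n2 : s(q, z) ≠ s(a, b) := by
                intro hh
                rcases Sym2.eq_iff.mp hh with ⟨rfl, rfl⟩ | ⟨rfl, rfl⟩
                · exact (hcase p ⟨hpqH.symm, h1.symm⟩).1 (Sym2.eq_swap)
                · exact (hcase p ⟨h1.symm, hpqH.symm⟩).2 (Sym2.eq_swap)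
              exact ⟨Subgraph.sup_adj.mpr (Or.inl ⟨h1, n1⟩),
                Subgraph.sup_adj.mpr (Or.inl ⟨h2, n2⟩)⟩
            exact le_trans (hsupp p q hpqH) (Set.ncard_le_ncard hsubset (Set.toFinite _))
          · obtain ⟨c, hcf, hadjF⟩ := (finsetSup_adj CHf F).mp hsupF
            exact le_trans ((hF c ((hmemf c).mp hcf)).1.2.2 p q hadjF)
              (hmonoT _ (hFleT c hcf) p q)
      exact le_trussNumber ⟨T, ⟨hTconn, ⟨s(x, y),
        Subgraph.sup_adj.mpr (Or.inl ⟨hxyH, hexy⟩)⟩, hsuppT⟩,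
        Subgraph.sup_adj.mpr (Or.inl ⟨hxyH, hexy⟩)⟩
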